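/- Under Assumptions A1 and A2, and with f = 0: a pair (u, τ) ∈ U × Λ* solves the interface flux formulation (A u − T^⊤ τ = 0, (I − X) T u = 0, (I + X^⊤) τ = 0) if and only if u = 0 and τ ∈ Z, where Z := ker(T^⊤) ∩ ker(I + X^⊤). -/

import Mathlib

/-- The transpose (dual map) `B^⊤ : Y* → X*` of a bounded linear operator `B : X → Y`. -/
noncomputable def trOp {X Y : Type*} [NormedAddCommGroup X] [NormedSpace ℂ X]
    [NormedAddCommGroup Y] [NormedSpace ℂ Y] (B : X →L[ℂ] Y) :
    (Y →L[ℂ] ℂ) →L[ℂ] (X →L[ℂ] ℂ) :=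
  (ContinuousLinearMap.compL ℂ X Y ℂ).flip B

lemma trOp_apply {X Y : Type*} [NormedAddCommGroup X] [NormedSpace ℂ X]
    [NormedAddCommGroup Y] [NormedSpace ℂ Y] (B : X →L[ℂ] Y) (g : Y →L[ℂ] ℂ) (x : X) :
    trOp B g x = g (B x) := rfl

/-- with `f = 0`, a pair `(u, τ)` solves the interface flux formulation
iff `u = 0` and `τ ∈ Z = ker(T^⊤) ∩ ker(I + X^⊤)`. -/
theorem statement3
    {Uhat U Lam : Type*}
    [NormedAddCommGroup Uhat] [InnerProductSpace ℂ Uhat] [CompleteSpace Uhat]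
    [NormedAddCommGroup U] [InnerProductSpace ℂ U] [CompleteSpace U]
    [NormedAddCommGroup Lam] [InnerProductSpace ℂ Lam] [CompleteSpace Lam]
    (R : Uhat →L[ℂ] U) (T : U →L[ℂ] Lam) (X : Lam →L[ℂ] Lam)
    -- Assumption A1
    (hRinj : LinearMap.ker (R : Uhat →ₗ[ℂ] U) = ⊥)
    (hRclosed : IsClosed (Set.range R))
    -- Assumption A2
    (hX2 : X.comp X = ContinuousLinearMap.id ℂ Lam)
    (hA2 : LinearMap.range (R : Uhat →ₗ[ℂ] U) = LinearMap.ker ((ContinuousLinearMap.id ℂ Lam - X).comp T : U →ₗ[ℂ] Lam))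
    (A : U →L[ℂ] (U →L[ℂ] ℂ))
    -- `Â = R^⊤ A R` is bijective with bounded inverse
    (Ahatinv : (Uhat →L[ℂ] ℂ) →L[ℂ] Uhat)
    (hAhat_left : ∀ uhat : Uhat, Ahatinv (trOp R (A (R uhat))) = uhat)
    (hAhat_right : ∀ g : Uhat →L[ℂ] ℂ, trOp R (A (R (Ahatinv g))) = g) :
    ∀ (u : U) (τ : Lam →L[ℂ] ℂ),
      (A u - trOp T τ = 0 ∧ T u - X (T u) = 0 ∧ τ + trOp X τ = 0) ↔
      (u = 0 ∧ trOp T τ = 0 ∧ τ + trOp X τ = 0) := by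
  intro u τ
  constructor
  · rintro ⟨h1, h2, h3⟩
    have hAu : A u = trOp T τ := by
      have := sub_eq_zero.mp h1; exact this
    have hτX : ∀ lam, τ (X lam) = - τ lam := by
      intro lam
      have := congrFun (congrArg DFunLike.coe h3) lam
      simp [trOp_apply] at this
      linear_combination this
    have hu : u ∈ LinearMap.range (R : Uhat →ₗ[ℂ] U) := by
      rw [hA2]
      simp only [LinearMap.mem_ker, ContinuousLinearMap.coe_comp',
        Function.comp_apply, ContinuousLinearMap.coe_sub',
        Pi.sub_apply, ContinuousLinearMap.coe_id', id]
      exact h2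
    obtain ⟨uh, huh⟩ := hu
    replace huh : R uh = u := huh
    have hTRfix : ∀ v : Uhat, X (T (R v)) = T (R v) := by
      intro v
      have hv : (R v : U) ∈ LinearMap.ker ((ContinuousLinearMap.id ℂ Lam - X).comp T : U →ₗ[ℂ] Lam) := by
        rw [← hA2]; exact ⟨v, rfl⟩
      have hv' : T (R v) - X (T (R v)) = 0 := hv
      exact (sub_eq_zero.mp hv').symm
    have hker : trOp R (A u) = 0 := by
      ext v
      have : τ (T (R v)) = 0 := by
        have h := hτX (T (R v))
        rw [hTRfix v] at h
        linear_combination h / 2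
      simp [trOp_apply, hAu, this]
    have hu0 : u = 0 := by
      have := hAhat_left uh
      rw [huh, hker] at this
      rw [← huh, ← this]
      simp
    refine ⟨hu0, ?_, h3⟩
    rw [← hAu, hu0]
    simp
  · rintro ⟨hu0, hτ0, h3⟩
    subst hu0
    refine ⟨?_, ?_, h3⟩
    · simp [hτ0]
    · simp
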